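/- With $\gamma_j$ defined by the $u$-admissibility formula and $\delta_0 = \sum_{j=1}^r \gamma_j$, one has $\delta_0 = \frac{1 - p^2}{\rho(q^{-1}-q)} + 1 - c$, where $p = \prod_{j=1}^r u_j$ and $c = 0$ if $r$ is odd, $c = p$ if $r$ is even. -/

import Mathlib

open Finset Polynomial

section helpers
lemma divkey {R : Type*} [CommRing R] {ι : Type*} [DecidableEq ι] (v : ι → R) (s : Finset ι) :
    (Even #s → (X^2 - 1 : R[X]) ∣ (∏ i ∈ s, (X - C (v i)) - ∏ i ∈ s, (C (v i) * X - 1))) ∧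
    (¬ Even #s →
      ((X^2 - 1 : R[X]) ∣ (∏ i ∈ s, (C (v i) * X - 1) + X * ∏ i ∈ s, (X - C (v i))) ∧
       (X^2 - 1 : R[X]) ∣ (X * ∏ i ∈ s, (C (v i) * X - 1) + ∏ i ∈ s, (X - C (v i))))) := by
  induction s using Finset.induction with
  | empty => simp
  | @insert a s ha ih =>
    rw [prod_insert ha, prod_insert ha, card_insert_of_notMem ha]
    constructor
    · intro hev
      have hodd : ¬ Even #s := by simp [Nat.even_add_one] at hev; simpa using hev
      obtain ⟨⟨Q1, h1⟩, ⟨Q2, h2⟩⟩ := ih.2 hodd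
      exact ⟨Q1 - C (v a) * Q2, by linear_combination h1 - C (v a) * h2⟩
    · intro hodd
      have hev : Even #s := by simpa [Nat.even_add_one] using hodd
      obtain ⟨P, hP⟩ := ih.1 hev
      refine ⟨⟨∏ i ∈ s, (X - C (v i)) + (1 - C (v a) * X) * P, by
        linear_combination (1 - C (v a) * X) * hP⟩,
        ⟨C (v a) * ∏ i ∈ s, (C (v i) * X - 1) + (X - C (v a)) * P, by
        linear_combination (X - C (v a)) * hP⟩⟩

lemma coeff_basis_top {F : Type*} [Field F] {r : ℕ} (u : Fin r → F)
    (j : Fin r) :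
    (Lagrange.basis univ u j).coeff (r - 1) = (∏ ℓ ∈ univ.erase j, (u j - u ℓ))⁻¹ := by
  rw [Lagrange.basis_eq_prod_sub_inv_mul_nodal_div (mem_univ j),
    ← Lagrange.nodal_erase_eq_nodal_div (mem_univ j), coeff_C_mul]
  have hm : (Lagrange.nodal ((univ : Finset (Fin r)).erase j) u).Monic := Lagrange.nodal_monic
  have hd : (Lagrange.nodal ((univ : Finset (Fin r)).erase j) u).natDegree = r - 1 := by
    rw [Lagrange.natDegree_nodal, card_erase_of_mem (mem_univ j), card_univ, Fintype.card_fin]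
  rw [← hd, hm.coeff_natDegree, mul_one, Lagrange.nodalWeight, prod_inv_distrib]

lemma master {F : Type*} [Field F] {r : ℕ} (u : Fin r → F)
    (hinj : Function.Injective u) (f : F[X]) (hf : f.degree < r) :
    ∑ j, f.eval (u j) / ∏ ℓ ∈ univ.erase j, (u j - u ℓ) = f.coeff (r - 1) := by
  have hvs : Set.InjOn u ↑(univ : Finset (Fin r)) := fun a _ b _ h => hinj h
  have hf' : f.degree < #(univ : Finset (Fin r)) := by
    simpa [card_univ] using hf
  have h := Lagrange.eq_interpolate hvs hf'
  have hc := congrArg (fun g => Polynomial.coeff g (r - 1)) h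
  simp only [Lagrange.interpolate_apply, finset_sum_coeff, coeff_C_mul] at hc
  rw [hc]
  refine sum_congr rfl fun j _ => ?_
  rw [coeff_basis_top u j, div_eq_mul_inv]

lemma quot_deg_coeff {F : Type*} [Field F] {r : ℕ} (hr : 0 < r) {A Q : F[X]}
    (hQ : A = ((X:F[X])^2 - 1) * Q) (hA : A.degree ≤ ((r : WithBot ℕ) + 1)) :
    Q.degree < (r : WithBot ℕ) ∧ Q.coeff (r - 1) = A.coeff (r + 1) := by
  have hdX2 : ((X:F[X])^2 - 1).degree = 2 := by
    rw [← C_1]; exact degree_X_pow_sub_C (by norm_num) 1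
  have hQdeg : Q.degree < (r : WithBot ℕ) := by
    rcases eq_or_ne Q 0 with h | h
    · rw [h, degree_zero]; exact WithBot.bot_lt_coe r
    · have h2 : ((X:F[X])^2 - 1).degree + Q.degree ≤ ((r : WithBot ℕ) + 1) := by
        rw [← degree_mul, ← hQ]; exact hA
      rw [hdX2, degree_eq_natDegree h] at h2
      rw [degree_eq_natDegree h]
      have h3 : Q.natDegree + 2 ≤ r + 1 := by exact_mod_cast add_comm (2 : WithBot ℕ) _ ▸ h2
      exact_mod_cast Nat.lt_of_lt_of_le (Nat.lt_succ_self _) (by omega)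
  refine ⟨hQdeg, ?_⟩
  have hc := congrArg (fun g => Polynomial.coeff g (r + 1)) hQ
  simp only [sub_mul, one_mul, coeff_sub] at hc
  have e1 : ((X:F[X])^2 * Q).coeff (r + 1) = Q.coeff (r - 1) := by
    have : r + 1 = (r - 1) + 2 := by omega
    rw [this, coeff_X_pow_mul]
  have e2 : Q.coeff (r + 1) = 0 := by
    refine coeff_eq_zero_of_degree_lt (hQdeg.trans ?_)
    exact_mod_cast Nat.lt_succ_self r
  rw [e1, e2, sub_zero] at hc
  exact hc.symm
lemma alg_core {F : Type*} [Field F] (a Gv p s K b c : F) (ha : a ≠ 0) (hK : K ≠ 0)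
    (hb : b ≠ 0) :
    (Gv/b) * (-b/K * (p/a) + c) =
      (-p/K) * ((Gv - s)/a) + K⁻¹ * (-(s*p)/a) + c * (Gv/b) := by
  field_simp
  ring

lemma alg_odd {F : Type*} [Field F] (a Gv p s K D b : F) (ha : a ≠ 0) (hK : K ≠ 0)
    (hb : b ≠ 0) :
    (Gv/b/D) * (-b/K * (p/a) + 1) =
      (-p/K) * (((Gv - s)/a)/D) + K⁻¹ * ((-(s*p)/a)/D) + Gv/b/D := by
  have h := alg_core a Gv p s K b 1 ha hK hb
  calc (Gv/b/D) * (-b/K * (p/a) + 1) = ((Gv/b) * (-b/K * (p/a) + 1))/D := by ring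
    _ = ((-p/K) * ((Gv - s)/a) + K⁻¹ * (-(s*p)/a) + 1 * (Gv/b))/D := by rw [h]
    _ = (-p/K) * (((Gv - s)/a)/D) + K⁻¹ * ((-(s*p)/a)/D) + Gv/b/D := by ring

lemma alg_even {F : Type*} [Field F] (a Gv p s K D b : F) (ha : a ≠ 0) (hK : K ≠ 0)
    (hb : b ≠ 0) :
    (Gv/b/D) * (-b/K * (p/a) + -a) =
      (-p/K) * (((Gv - s)/a)/D) + K⁻¹ * ((-(s*p)/a)/D) + -(a * (Gv/b))/D := by
  have h := alg_core a Gv p s K b (-a) ha hK hb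
  calc (Gv/b/D) * (-b/K * (p/a) + -a) = ((Gv/b) * (-b/K * (p/a) + -a))/D := by ring
    _ = ((-p/K) * ((Gv - s)/a) + K⁻¹ * (-(s*p)/a) + (-a) * (Gv/b))/D := by rw [h]
    _ = (-p/K) * (((Gv - s)/a)/D) + K⁻¹ * ((-(s*p)/a)/D) + -(a * (Gv/b))/D := by ring
end helpers

theorem stmt12 {F : Type*} [Field F] {r : ℕ} (u : Fin r → F)
    (hinj : Function.Injective u) (h0 : ∀ i, u i ≠ 0)
    (h1 : ∀ i j, u i * u j ≠ 1)
    (ρ q : F) (hρ : ρ ≠ 0) (hq : q ≠ 0) (hq2 : q ^ 2 ≠ 1)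
    (γ : Fin r → F)
    (hγ : ∀ j, γ j = (∏ ℓ ∈ univ.erase j, ((u ℓ * u j - 1) / (u j - u ℓ))) *
        ((1 - u j ^ 2) / (ρ * (q⁻¹ - q)) * ∏ ℓ ∈ univ.erase j, u ℓ +
          (if Odd r then 1 else -u j))) :
    ∑ j, γ j = (1 - (∏ j, u j) ^ 2) / (ρ * (q⁻¹ - q)) + 1 -
        (if Odd r then 0 else ∏ j, u j) := by
  classical
  have hK : ρ * (q⁻¹ - q) ≠ 0 := by
    have : q⁻¹ - q = (1 - q ^ 2) / q := by field_simp
    rw [this]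
    have h1q : 1 - q ^ 2 ≠ 0 := fun h => hq2 (by linear_combination -h)
    exact mul_ne_zero hρ (div_ne_zero h1q hq)
  rcases Nat.eq_zero_or_pos r with hr | hr
  · subst hr
    simp only [univ_eq_empty, sum_empty, prod_empty]
    norm_num
  set K : F := ρ * (q⁻¹ - q) with hKdef
  set p : F := ∏ j, u j with hpdef
  have hp : p ≠ 0 := prod_ne_zero_iff.mpr fun i _ => h0 i
  have hsq : ∀ j, u j ^ 2 - 1 ≠ 0 := fun j h => h1 j j (by linear_combination h)
  have hdne : ∀ j : Fin r, ∏ ℓ ∈ univ.erase j, (u j - u ℓ) ≠ 0 := fun j =>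
    prod_ne_zero_iff.mpr fun ℓ hℓ => sub_ne_zero_of_ne fun h =>
      (mem_erase.mp hℓ).1 (hinj h.symm)
  set W : F[X] := Lagrange.nodal univ (fun j => (u j)⁻¹) with hWdef
  set hh : F[X] := Lagrange.nodal univ u with hhdef
  set G : F[X] := C p * W with hGdef
  have hcard : #(univ : Finset (Fin r)) = r := by simp
  have hGprod : ∏ j, (C (u j) * X - 1 : F[X]) = G := by
    rw [hGdef, hWdef, Lagrange.nodal, hpdef, map_prod, ← prod_mul_distrib]
    refine prod_congr rfl fun j _ => ?_
    rw [mul_sub, ← C_mul, mul_inv_cancel₀ (h0 j), C_1]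
  have hGval : ∀ i, G.eval (u i) = (u i ^ 2 - 1) * ∏ ℓ ∈ univ.erase i, (u ℓ * u i - 1) := by
    intro i
    have h2 : G.eval (u i) = ∏ j, (u j * u i - 1) := by
      rw [← hGprod, eval_prod]; simp
    rw [h2, ← mul_prod_erase univ _ (mem_univ i), sq]
  have hWdeg : W.degree = (r : WithBot ℕ) := by rw [hWdef, Lagrange.degree_nodal, hcard]
  have hhdeg : hh.degree = (r : WithBot ℕ) := by rw [hhdef, Lagrange.degree_nodal, hcard]
  have hGdeg : G.degree = (r : WithBot ℕ) := by
    rw [hGdef, degree_mul, degree_C hp, hWdeg, zero_add]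
  have hGne : G ≠ 0 := fun h => by simp [h] at hGdeg
  have hhne : hh ≠ 0 := fun h => by simp [h] at hhdeg
  have hGcr : G.coeff r = p := by
    have h2 : W.natDegree = r := natDegree_eq_of_degree_eq_some hWdeg
    rw [hGdef, coeff_C_mul, ← h2, (Lagrange.nodal_monic).coeff_natDegree, mul_one]
  have hhcr : hh.coeff r = 1 := by
    have h2 : hh.natDegree = r := natDegree_eq_of_degree_eq_some hhdeg
    rw [← h2, (Lagrange.nodal_monic).coeff_natDegree]
  have hGc0 : G.coeff 0 = (-1) ^ r := by
    rw [coeff_zero_eq_eval_zero, ← hGprod, eval_prod]; simp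
  have hhval : ∀ i, hh.eval (u i) = 0 := fun i =>
    Lagrange.eval_nodal_at_node (mem_univ i)
  -- divX facts
  set f₁ : F[X] := G.divX with hf1def
  set f₂ : F[X] := hh.divX with hf2def
  have hf1e : ∀ j, u j * f₁.eval (u j) + (-1) ^ r = G.eval (u j) := by
    intro j
    have h2 := congrArg (Polynomial.eval (u j)) (X_mul_divX_add G)
    simpa [hGc0] using h2
  have hf2e : ∀ j, u j * f₂.eval (u j) + (-1) ^ r * p = 0 := by
    intro j
    have h2 := congrArg (Polynomial.eval (u j)) (X_mul_divX_add hh)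
    have hhc0 : hh.coeff 0 = (-1) ^ r * p := by
      rw [coeff_zero_eq_eval_zero, hhdef, Lagrange.eval_nodal]
      simp only [zero_sub]
      rw [prod_congr rfl (fun x _ => (neg_one_mul (u x)).symm), prod_mul_distrib, prod_const,
        card_univ, Fintype.card_fin, hpdef]
    rw [hhval j] at h2
    simpa [hhc0] using h2
  have hf1deg : f₁.degree < (r : WithBot ℕ) := hGdeg ▸ degree_divX_lt hGne
  have hf2deg : f₂.degree < (r : WithBot ℕ) := hhdeg ▸ degree_divX_lt hhne
  have hf1c : f₁.coeff (r - 1) = p := by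
    rw [hf1def, coeff_divX, Nat.sub_add_cancel hr, hGcr]
  have hf2c : f₂.coeff (r - 1) = 1 := by
    rw [hf2def, coeff_divX, Nat.sub_add_cancel hr, hhcr]
  have hS1 : ∑ j, f₁.eval (u j) / ∏ ℓ ∈ univ.erase j, (u j - u ℓ) = p := by
    rw [master u hinj f₁ hf1deg, hf1c]
  have hS2 : ∑ j, f₂.eval (u j) / ∏ ℓ ∈ univ.erase j, (u j - u ℓ) = 1 := by
    rw [master u hinj f₂ hf2deg, hf2c]
  -- value formulas per node
  have hF1' : ∀ j, f₁.eval (u j) = (G.eval (u j) - (-1) ^ r) / u j := by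
    intro j; field_simp [h0 j]; linear_combination hf1e j
  have hF2' : ∀ j, f₂.eval (u j) = -((-1) ^ r * p) / u j := by
    intro j; field_simp [h0 j]; linear_combination hf2e j
  have hE' : ∀ j : Fin r, ∏ ℓ ∈ univ.erase j, u ℓ = p / u j := by
    intro j
    rw [eq_div_iff (h0 j), mul_comm, hpdef, mul_prod_erase univ u (mem_univ j)]
  have hN' : ∀ j : Fin r, ∏ ℓ ∈ univ.erase j, (u ℓ * u j - 1) = G.eval (u j) / (u j ^ 2 - 1) := by
    intro j
    rw [hGval j, mul_comm, mul_div_assoc, div_self (hsq j), mul_one]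
  -- rewrite the product of quotients
  have hW' : ∀ j : Fin r, ∏ ℓ ∈ univ.erase j, ((u ℓ * u j - 1) / (u j - u ℓ)) =
      (∏ ℓ ∈ univ.erase j, (u ℓ * u j - 1)) / ∏ ℓ ∈ univ.erase j, (u j - u ℓ) :=
    fun j => prod_div_distrib _ _
  clear_value K p W hh G f₁ f₂
  by_cases hodd : Odd r
  · -- odd case
    obtain ⟨Q, hQ⟩ := ((divkey u univ).2 (by
      rw [hcard]; exact (Nat.not_even_iff_odd).mpr hodd)).1
    rw [hGprod, ← Lagrange.nodal_eq, ← hhdef] at hQ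
    have hXh : ((X : F[X]) * hh).degree = 1 + (r : WithBot ℕ) := by
      rw [degree_mul, degree_X, hhdeg]
    have hAdeg : (G + X * hh).degree ≤ ((r : WithBot ℕ) + 1) := by
      refine (degree_add_le _ _).trans ?_
      rw [hGdeg, hXh]
      simp only [max_le_iff]
      exact ⟨by exact_mod_cast Nat.le_succ r, by exact_mod_cast (by omega : 1 + r ≤ r + 1)⟩
    obtain ⟨hQdeg, hQc⟩ := quot_deg_coeff hr hQ hAdeg
    have hAc : (G + X * hh).coeff (r + 1) = 1 := by
      rw [coeff_add, coeff_X_mul, hhcr,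
        coeff_eq_zero_of_degree_lt (hGdeg ▸ (by exact_mod_cast Nat.lt_succ_self r)), zero_add]
    rw [hAc] at hQc
    have hQval : ∀ j, Q.eval (u j) = (∏ ℓ ∈ univ.erase j, (u ℓ * u j - 1)) := by
      intro j
      have h2 := congrArg (Polynomial.eval (u j)) hQ
      simp only [eval_add, eval_mul, eval_sub, eval_pow, eval_X, eval_one, hhval j,
        mul_zero, add_zero] at h2
      rw [hGval j] at h2
      exact (mul_left_cancel₀ (hsq j) h2.symm)
    have hSQ : ∑ j, Q.eval (u j) / ∏ ℓ ∈ univ.erase j, (u j - u ℓ) = 1 := by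
      rw [master u hinj Q hQdeg, hQc]
    have hterm : ∀ j : Fin r, γ j =
        (-p / K) * (f₁.eval (u j) / ∏ ℓ ∈ univ.erase j, (u j - u ℓ)) +
        K⁻¹ * (f₂.eval (u j) / ∏ ℓ ∈ univ.erase j, (u j - u ℓ)) +
        Q.eval (u j) / ∏ ℓ ∈ univ.erase j, (u j - u ℓ) := by
      intro j
      rw [hγ j, if_pos hodd, hW', hE', hN', hF1' j, hF2' j, hQval j, hN' j,
        show (1 - u j ^ 2 : F) = -(u j ^ 2 - 1) from by ring]
      exact alg_odd (u j) (G.eval (u j)) p ((-1)^r) K _ _ (h0 j) hK (hsq j)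
    rw [if_pos hodd, sum_congr rfl fun j _ => hterm j, sum_add_distrib, sum_add_distrib,
      ← mul_sum, ← mul_sum, hS1, hS2, hSQ]
    field_simp [hK]
    ring
  · -- even case
    obtain ⟨P, hP⟩ := (divkey u univ).1 (by
      rw [hcard]; exact Nat.not_odd_iff_even.mp hodd)
    rw [hGprod, ← Lagrange.nodal_eq, ← hhdef] at hP
    have hQ : X * hh - X * G = ((X:F[X])^2 - 1) * (X * P) := by
      linear_combination (X : F[X]) * hP
    have hXh : ((X : F[X]) * hh).degree = 1 + (r : WithBot ℕ) := by
      rw [degree_mul, degree_X, hhdeg]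
    have hXG : ((X : F[X]) * G).degree = 1 + (r : WithBot ℕ) := by
      rw [degree_mul, degree_X, hGdeg]
    have hAdeg : (X * hh - X * G).degree ≤ ((r : WithBot ℕ) + 1) := by
      refine (degree_sub_le _ _).trans ?_
      rw [hXh, hXG]
      simp only [max_le_iff, le_refl, and_self]
      exact_mod_cast (by omega : 1 + r ≤ r + 1)
    obtain ⟨hQdeg, hQc⟩ := quot_deg_coeff hr hQ hAdeg
    have hAc : (X * hh - X * G).coeff (r + 1) = 1 - p := by
      rw [coeff_sub, coeff_X_mul, coeff_X_mul, hhcr, hGcr]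
    rw [hAc] at hQc
    have hQval : ∀ j, (X * P).eval (u j) =
        -(u j * ∏ ℓ ∈ univ.erase j, (u ℓ * u j - 1)) := by
      intro j
      have h2 := congrArg (Polynomial.eval (u j)) hP
      simp only [eval_sub, eval_mul, eval_pow, eval_X, eval_one, hhval j, zero_sub] at h2
      rw [hGval j] at h2
      have h3 : P.eval (u j) = -(∏ ℓ ∈ univ.erase j, (u ℓ * u j - 1)) := by
        refine mul_left_cancel₀ (hsq j) ?_
        rw [← h2]; ring
      rw [eval_mul, eval_X, h3]; ring
    have hSQ : ∑ j, (X * P).eval (u j) / ∏ ℓ ∈ univ.erase j, (u j - u ℓ) = 1 - p := by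
      rw [master u hinj _ hQdeg, hQc]
    have hterm : ∀ j : Fin r, γ j =
        (-p / K) * (f₁.eval (u j) / ∏ ℓ ∈ univ.erase j, (u j - u ℓ)) +
        K⁻¹ * (f₂.eval (u j) / ∏ ℓ ∈ univ.erase j, (u j - u ℓ)) +
        (X * P).eval (u j) / ∏ ℓ ∈ univ.erase j, (u j - u ℓ) := by
      intro j
      rw [hγ j, if_neg hodd, hW', hE', hN', hF1' j, hF2' j, hQval j, hN' j,
        show (1 - u j ^ 2 : F) = -(u j ^ 2 - 1) from by ring]
      exact alg_even (u j) (G.eval (u j)) p ((-1)^r) K _ _ (h0 j) hK (hsq j)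
    rw [if_neg hodd, sum_congr rfl fun j _ => hterm j, sum_add_distrib, sum_add_distrib,
      ← mul_sum, ← mul_sum, hS1, hS2, hSQ]
    field_simp [hK]
    ring
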